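/- Let G be a finite simple undirected graph and let p, u, v be distinct vertices that are pairwise non-adjacent. If there exists a minimum uv-separator C (i.e., a uv-separator with |C| = κ(u,v)) such that p ∉ C, then κ(u,v) ≥ min(κ(p,u), κ(p,v)). -/
import Mathlib


/-- `C` is an `xy`-separator in the simple graph `G`: `x ∉ C`, `y ∉ C`, and every walk in
`G` from `x` to `y` passes through a vertex of `C`. -/
def IsSeparator {V : Type*} (G : SimpleGraph V) (x y : V) (C : Set V) : Prop :=
  x ∉ C ∧ y ∉ C ∧ ∀ w : G.Walk x y, ∃ c ∈ C, c ∈ w.support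

/-- For non-adjacent distinct vertices `x, y`, the vertex connectivity `κ(x,y)`: the
minimum cardinality of an `xy`-separator. -/
noncomputable def vertexConn {V : Type*} (G : SimpleGraph V) (x y : V) : ℕ :=
  sInf {n : ℕ | ∃ C : Set V, IsSeparator G x y C ∧ C.ncard = n}

/-- Let `p, u, v` be distinct, pairwise non-adjacent vertices of a finite
simple graph `G`. If some minimum `uv`-separator avoids `p`, then
`κ(u,v) ≥ min (κ(p,u), κ(p,v))`. -/
theorem triangle_inequality_vertex_connectivity {V : Type*} [Fintype V]
    (G : SimpleGraph V) (p u v : V)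
    (hpu : p ≠ u) (hpv : p ≠ v) (huv : u ≠ v)
    (hapu : ¬ G.Adj p u) (hapv : ¬ G.Adj p v) (hauv : ¬ G.Adj u v)
    (hmin : ∃ C : Set V, IsSeparator G u v C ∧ C.ncard = vertexConn G u v ∧ p ∉ C) :
    min (vertexConn G p u) (vertexConn G p v) ≤ vertexConn G u v := by
  obtain ⟨C, ⟨huC, hvC, hsep⟩, hcard, hpC⟩ := hmin
  by_cases h : ∀ w : G.Walk p u, ∃ c ∈ C, c ∈ w.support
  · have h1 : vertexConn G p u ≤ vertexConn G u v := by
      rw [← hcard]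
      exact Nat.sInf_le ⟨C, ⟨hpC, huC, h⟩, rfl⟩
    exact le_trans (min_le_left _ _) h1
  · push_neg at h
    obtain ⟨w1, hw1⟩ := h
    have hv : ∀ w : G.Walk p v, ∃ c ∈ C, c ∈ w.support := by
      intro w
      by_contra hc
      push_neg at hc
      obtain ⟨c, hcC, hcs⟩ := hsep (w1.reverse.append w)
      rcases ((SimpleGraph.Walk.mem_support_append_iff _ _).mp hcs) with h' | h'
      · rw [SimpleGraph.Walk.support_reverse, List.mem_reverse] at h'
        exact hw1 c hcC h'
      · exact hc c hcC h'
    have h2 : vertexConn G p v ≤ vertexConn G u v := by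
      rw [← hcard]
      exact Nat.sInf_le ⟨C, ⟨hpC, hvC, hv⟩, rfl⟩
    exact le_trans (min_le_right _ _) h2
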